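/- Let p be an odd prime, m and k positive integers with m/gcd(k,m) odd. For any u ∈ F_{p^m}, the exponential sums ∑_{x ∈ F_{p^m}} ω_p^{Tr(u x^{p^k+1})} and ∑_{x ∈ F_{p^m}} ω_p^{Tr(u x^2)} are equal. -/

import Mathlib

noncomputable def ePow (p : ℕ) (a : ZMod p) : ℂ :=
  Complex.exp (2 * Real.pi * Complex.I * (a.val : ℂ) / (p : ℂ))

private lemma gcd_two_mul_aux (k m : ℕ) (hk : 0 < k) (h : Odd (m / Nat.gcd k m)) :
    Nat.gcd (2 * k) m = Nat.gcd k m := by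
  set d := Nat.gcd k m with hd
  have hdpos : 0 < d := Nat.gcd_pos_of_pos_left m hk
  have hdm : d ∣ m := Nat.gcd_dvd_right k m
  apply Nat.dvd_antisymm
  · have h1 : Nat.gcd (2 * k) m ∣ 2 * d := by
      have h2m : Nat.gcd (2 * k) (2 * m) = 2 * d := by rw [Nat.gcd_mul_left]
      exact h2m ▸ Nat.dvd_gcd (Nat.gcd_dvd_left _ _)
        ((Nat.gcd_dvd_right _ _).trans (dvd_mul_left m 2))
    have h2 : Nat.gcd (2 * d) m = d := by
      conv_lhs => rw [show m = d * (m / d) from (Nat.mul_div_cancel' hdm).symm]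
      rw [mul_comm 2 d, Nat.gcd_mul_left, Nat.coprime_two_left.mpr h, mul_one]
    exact h2 ▸ Nat.dvd_gcd h1 (Nat.gcd_dvd_right _ _)
  · exact Nat.dvd_gcd ((Nat.gcd_dvd_left k m).trans (dvd_mul_left k 2)) hdm

private lemma gcd_eq_two_aux (p m k : ℕ) (hp : p.Prime) (hodd : Odd p)
    (hm : 0 < m) (hk : 0 < k) (h : Odd (m / Nat.gcd k m)) :
    Nat.gcd (p ^ k + 1) (p ^ m - 1) = 2 := by
  set N := p ^ k + 1 with hN
  set n := p ^ m - 1 with hn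
  set g := Nat.gcd N n with hg
  have hp1 : 1 < p := hp.one_lt
  have hpk1 : 1 ≤ p ^ k := Nat.one_le_pow _ _ hp.pos
  have hpm1 : 1 < p ^ m := Nat.one_lt_pow hm.ne' hp1
  have hgN : g ∣ N := Nat.gcd_dvd_left _ _
  have hgn : g ∣ n := Nat.gcd_dvd_right _ _
  have hfac : p ^ (2 * k) - 1 = N * (p ^ k - 1) := by
    have h2 : p ^ (2 * k) = p ^ k * p ^ k := by rw [two_mul, pow_add]
    have h3 : 1 ≤ p ^ k * p ^ k := Nat.one_le_iff_ne_zero.mpr (by positivity)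
    rw [h2]; zify [hpk1, h3]; rw [hN]; push_cast; ring
  have hg2k : g ∣ p ^ (2 * k) - 1 := hfac ▸ (hgN.trans (dvd_mul_right _ _))
  have key : ∀ a : ℕ, 0 < a → (g ∣ p ^ a - 1 ↔ (p : ZMod g) ^ a = 1) := by
    intro a ha
    have h1a : 1 ≤ p ^ a := Nat.one_le_pow _ _ hp.pos
    rw [← Nat.modEq_iff_dvd' h1a, ← Nat.cast_pow, show ((1 : ZMod g) = ((1 : ℕ) : ZMod g)) by simp,
      ZMod.natCast_eq_natCast_iff]
    exact ⟨Nat.ModEq.symm, Nat.ModEq.symm⟩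
  have e1 : (p : ZMod g) ^ (2 * k) = 1 := (key _ (by omega)).mp hg2k
  have e2 : (p : ZMod g) ^ m = 1 := (key _ hm).mp hgn
  have e3 : (p : ZMod g) ^ Nat.gcd (2 * k) m = 1 := pow_gcd_eq_one.mpr ⟨e1, e2⟩
  rw [gcd_two_mul_aux k m hk h] at e3
  set d := Nat.gcd k m with hd
  have hdpos : 0 < d := Nat.gcd_pos_of_pos_left m hk
  have hgd : g ∣ p ^ d - 1 := (key d hdpos).mpr e3
  have hdk : d ∣ k := Nat.gcd_dvd_left k m
  have hdvd : p ^ d - 1 ∣ p ^ k - 1 := by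
    have := Nat.sub_dvd_pow_sub_pow (p ^ d) 1 (k / d)
    rwa [one_pow, ← pow_mul, Nat.mul_div_cancel' hdk] at this
  have hgk : g ∣ p ^ k - 1 := hgd.trans hdvd
  have hg2 : g ∣ 2 := by
    have := Nat.dvd_sub hgN hgk
    rwa [show N - (p ^ k - 1) = 2 by omega] at this
  have h2g : 2 ∣ g := by
    obtain ⟨a, ha⟩ : Odd (p ^ k) := hodd.pow
    obtain ⟨b, hb⟩ : Odd (p ^ m) := hodd.pow
    exact Nat.dvd_gcd (by omega) (by omega)
  exact Nat.dvd_antisymm hg2 h2g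

private lemma exists_t_aux (N n : ℕ) (hNpos : 0 < N) (hgcd : Nat.gcd N n = 2)
    (hN : 2 ∣ N) (hn : 2 ∣ n) (hnpos : 0 < n) :
    ∃ t : ℕ, 0 < t ∧ Odd t ∧ Nat.Coprime t n ∧ 2 * t ≡ N [MOD n] := by
  have h4 : ¬(4 ∣ N ∧ 4 ∣ n) := by
    rintro ⟨h1, h2⟩
    have := Nat.dvd_gcd h1 h2
    omega
  obtain ⟨t, ht⟩ : ∃ t : ℕ, 0 < t ∧ Odd t ∧ 2 * t % n = N % n := by
    by_cases hodd : Odd (N / 2)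
    · refine ⟨N / 2, by omega, hodd, ?_⟩
      rw [show 2 * (N / 2) = N by omega]
    · refine ⟨N / 2 + n / 2, by omega, ?_, ?_⟩
      · rw [Nat.odd_iff] at hodd ⊢; omega
      · have : 2 * (N / 2 + n / 2) = N + n := by omega
        rw [this, Nat.add_mod_right]
  obtain ⟨htpos, htodd, htmod⟩ := ht
  refine ⟨t, htpos, htodd, ?_, htmod⟩
  by_contra hc
  have hgpos : 0 < Nat.gcd t n := Nat.gcd_pos_of_pos_right t hnpos
  have hne1 : Nat.gcd t n ≠ 1 := hc
  set r := (Nat.gcd t n).minFac with hr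
  have hrprime : r.Prime := Nat.minFac_prime hne1
  have hrt : r ∣ t := (Nat.minFac_dvd _).trans (Nat.gcd_dvd_left _ _)
  have hrn : r ∣ n := (Nat.minFac_dvd _).trans (Nat.gcd_dvd_right _ _)
  have hrN : r ∣ N := by
    have h1 : 2 * t ≡ N [MOD r] := Nat.ModEq.of_dvd hrn htmod
    have h2 : r ∣ 2 * t := hrt.mul_left 2
    have h3 : (0 : ℕ) ≡ N [MOD r] := (Nat.modEq_zero_iff_dvd.mpr h2).symm.trans h1
    exact (Nat.modEq_zero_iff_dvd.mp h3.symm)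
  have : r ∣ 2 := hgcd ▸ Nat.dvd_gcd hrN hrn
  have hr2 : r = 2 := (Nat.prime_dvd_prime_iff_eq hrprime Nat.prime_two).mp this
  rw [hr2] at hrt
  rw [Nat.odd_iff] at htodd
  omega

theorem exp_sum_power_eq_exp_sum_square (p m k : ℕ) (hp : p.Prime) (hodd : Odd p)
    (hm : 0 < m) (hk : 0 < k) (h : Odd (m / Nat.gcd k m))
    (F : Type*) [Field F] [Fintype F] [Algebra (ZMod p) F]
    (hcard : Fintype.card F = p ^ m) (u : F) :
    ∑ x : F, ePow p (Algebra.trace (ZMod p) F (u * x ^ (p ^ k + 1)))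
      = ∑ x : F, ePow p (Algebra.trace (ZMod p) F (u * x ^ 2)) := by
  set N := p ^ k + 1 with hN
  set n := p ^ m - 1 with hn
  have hp1 : 1 < p := hp.one_lt
  have hpm1 : 1 < p ^ m := Nat.one_lt_pow hm.ne' hp1
  have hnpos : 0 < n := by
    obtain ⟨b, hb⟩ : Odd (p ^ m) := hodd.pow
    omega
  have hgcd : Nat.gcd N n = 2 := gcd_eq_two_aux p m k hp hodd hm hk h
  have h2N : 2 ∣ N := by
    obtain ⟨a, ha⟩ : Odd (p ^ k) := hodd.pow
    omega
  have h2n : 2 ∣ n := by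
    obtain ⟨b, hb⟩ : Odd (p ^ m) := hodd.pow
    omega
  obtain ⟨t, htpos, htodd, htcop, htmod⟩ := exists_t_aux N n (by omega) hgcd h2N h2n hnpos
  have hcardu : Nat.card Fˣ = n := by
    rw [Nat.card_units, Nat.card_eq_fintype_card, hcard]
  have hcop' : (Nat.card Fˣ).Coprime t := by rw [hcardu]; exact htcop.symm
  have hbiju := hcop'.pow_left_bijective
  have hbij : Function.Bijective (fun x : F => x ^ t) := by
    rw [← Finite.injective_iff_bijective]
    intro x y hxy
    simp only at hxy
    by_cases hx : x = 0
    · subst hx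
      rw [zero_pow htpos.ne', eq_comm, pow_eq_zero_iff htpos.ne'] at hxy
      exact hxy.symm
    · by_cases hy : y = 0
      · subst hy; rw [zero_pow htpos.ne', pow_eq_zero_iff htpos.ne'] at hxy; exact hxy
      · have h1 : Units.mk0 x hx ^ t = Units.mk0 y hy ^ t := by
          ext; simp [hxy]
        have h2 := hbiju.injective h1
        simpa using congrArg Units.val h2
  have hkey : ∀ x : F, x ^ N = x ^ (2 * t) := by
    intro x
    by_cases hx : x = 0
    · subst hx; rw [zero_pow (by omega), zero_pow (by omega)]
    · have hord : orderOf (Units.mk0 x hx) ∣ n := by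
        rw [← hcardu]; exact orderOf_dvd_natCard _
      have h1 : Units.mk0 x hx ^ N = Units.mk0 x hx ^ (2 * t) :=
        pow_eq_pow_iff_modEq.mpr ((htmod.of_dvd hord).symm)
      simpa using congrArg Units.val h1
  refine Fintype.sum_bijective (fun x : F => x ^ t) hbij _ _ (fun x => ?_)
  have : x ^ N = (x ^ t) ^ 2 := by rw [← pow_mul, mul_comm]; exact hkey x
  rw [this]
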